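/- Swap-and-average step in the proof of Lemma D.1: Let j ≠ j' be indices in {1,…,k} and assume ζ is invariant under simultaneously swapping coordinates j and j' of z and of z'. Then for every λ ∈ ℝ^k, the vector λ' defined by λ'_j = λ'_{j'} = sqrt((λ_j² + λ_{j'}²)/2) and λ'_i = λ_i for i ∉ {j, j'} satisfies F(λ') ≥ F(λ); moreover Σ_i (λ'_i)² = Σ_i λ_i². -/
import Mathlib


open scoped BigOperators

/-- Objective `F(λ) = Σ_{(z,z')} ζ(z,z')·√(Σ_i λ_i²·1[z_i ≠ z'_i])`, where points of
`{−1,+1}^k` are encoded as `Fin k → Bool`. -/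
noncomputable def F {k : ℕ} (ζ : ((Fin k → Bool) × (Fin k → Bool)) → ℝ)
    (lam : Fin k → ℝ) : ℝ :=
  ∑ p : (Fin k → Bool) × (Fin k → Bool),
    ζ p * Real.sqrt (∑ i, (lam i) ^ 2 * (if p.1 i ≠ p.2 i then 1 else 0))

/-- Concavity of `√·`: the average of square roots is at most the square root of
the average. -/
lemma sqrt_avg_ge (a b : ℝ) (ha : 0 ≤ a) (hb : 0 ≤ b) :
    (Real.sqrt a + Real.sqrt b) / 2 ≤ Real.sqrt ((a + b) / 2) := by
  rw [Real.le_sqrt (by positivity) (by positivity)]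
  nlinarith [Real.sq_sqrt ha, Real.sq_sqrt hb, sq_nonneg (Real.sqrt a - Real.sqrt b),
    Real.sqrt_nonneg a, Real.sqrt_nonneg b]

/-- Swap-and-average step in the proof of Lemma D.1: averaging the squared
weights of two coordinates under which `ζ` is swap-invariant does not decrease
`F` and preserves the squared Euclidean norm. -/
theorem swap_and_average
    (k : ℕ) (j j' : Fin k) (hjj : j ≠ j')
    (ζ : ((Fin k → Bool) × (Fin k → Bool)) → ℝ)
    (hζ0 : ∀ p, 0 ≤ ζ p) (hζ1 : ∑ p, ζ p = 1)
    (hswap : ∀ z z' : Fin k → Bool,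
      ζ (z ∘ Equiv.swap j j', z' ∘ Equiv.swap j j') = ζ (z, z'))
    (lam : Fin k → ℝ) :
    F ζ lam ≤
        F ζ (fun i => if i = j ∨ i = j' then
          Real.sqrt (((lam j) ^ 2 + (lam j') ^ 2) / 2) else lam i) ∧
      (∑ i, (if i = j ∨ i = j' then
          Real.sqrt (((lam j) ^ 2 + (lam j') ^ 2) / 2) else lam i) ^ 2) =
        ∑ i, (lam i) ^ 2 := by
  set σ : Equiv.Perm (Fin k) := Equiv.swap j j' with hσ
  set c : ℝ := Real.sqrt (((lam j) ^ 2 + (lam j') ^ 2) / 2) with hc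
  set lam' : Fin k → ℝ := fun i => if i = j ∨ i = j' then c else lam i with hlam'
  have hc2 : c ^ 2 = ((lam j) ^ 2 + (lam j') ^ 2) / 2 := Real.sq_sqrt (by positivity)
  -- squared entries of lam' are averages
  have hsq : ∀ i, (lam' i) ^ 2 = ((lam i) ^ 2 + (lam (σ i)) ^ 2) / 2 := by
    intro i
    have hli : lam' i = if i = j ∨ i = j' then c else lam i := rfl
    rw [hli]
    split_ifs with h
    · rcases h with rfl | rfl
      · rw [hσ, Equiv.swap_apply_left, hc2]
      · rw [hσ, Equiv.swap_apply_right, hc2]; ring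
    · push_neg at h
      rw [hσ, Equiv.swap_apply_of_ne_of_ne h.1 h.2]; ring
  -- abbreviation for the inner sum
  set S : (Fin k → ℝ) → ((Fin k → Bool) × (Fin k → Bool)) → ℝ :=
    fun l p => ∑ i, (l i) ^ 2 * (if p.1 i ≠ p.2 i then 1 else 0) with hS
  have hSnonneg : ∀ l p, 0 ≤ S l p := by
    intro l p
    apply Finset.sum_nonneg
    intro i _
    positivity
  -- the inner sum for the swapped lam equals the inner sum at the swapped point
  have hSswap : ∀ p : ((Fin k → Bool) × (Fin k → Bool)),
      S (fun i => lam (σ i)) p = S lam (p.1 ∘ σ, p.2 ∘ σ) := by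
    intro p
    refine Fintype.sum_equiv σ _ _ ?_
    intro i
    simp [Function.comp, hσ, Equiv.swap_apply_self]
  -- F is invariant under swapping lam
  have hFswap : F ζ (fun i => lam (σ i)) = F ζ lam := by
    unfold F
    have : ∀ p : ((Fin k → Bool) × (Fin k → Bool)),
        ζ p * Real.sqrt (S (fun i => lam (σ i)) p)
          = ζ (p.1 ∘ σ, p.2 ∘ σ) * Real.sqrt (S lam (p.1 ∘ σ, p.2 ∘ σ)) := by
      intro p
      rw [hSswap p, hswap]
    calc (∑ p : (Fin k → Bool) × (Fin k → Bool),
            ζ p * Real.sqrt (S (fun i => lam (σ i)) p))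
        = ∑ p : (Fin k → Bool) × (Fin k → Bool),
            ζ (p.1 ∘ σ, p.2 ∘ σ) * Real.sqrt (S lam (p.1 ∘ σ, p.2 ∘ σ)) :=
          Finset.sum_congr rfl (fun p _ => this p)
      _ = ∑ p : (Fin k → Bool) × (Fin k → Bool), ζ p * Real.sqrt (S lam p) := by
          refine Fintype.sum_equiv
            ((Equiv.arrowCongr σ (Equiv.refl Bool)).prodCongr
              (Equiv.arrowCongr σ (Equiv.refl Bool))) _ _ ?_
          intro p
          have h1 : ((Equiv.arrowCongr σ (Equiv.refl Bool)).prodCongr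
              (Equiv.arrowCongr σ (Equiv.refl Bool)) p) = (p.1 ∘ σ, p.2 ∘ σ) := by
            ext x
            · simp [Equiv.arrowCongr, hσ, Equiv.swap_apply_self, Function.comp]
            · simp [Equiv.arrowCongr, hσ, Equiv.swap_apply_self, Function.comp]
          rw [h1]
  -- the inner sum for lam' is the average
  have hSavg : ∀ p, S lam' p = (S lam p + S (fun i => lam (σ i)) p) / 2 := by
    intro p
    rw [hS]
    simp only
    rw [add_div, Finset.sum_div, Finset.sum_div, ← Finset.sum_add_distrib]
    refine Finset.sum_congr rfl ?_
    intro i _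
    rw [hsq i]
    ring
  constructor
  · -- the F inequality
    have key : F ζ lam = (F ζ lam + F ζ (fun i => lam (σ i))) / 2 := by
      rw [hFswap]; ring
    rw [key]
    unfold F
    rw [← Finset.sum_add_distrib, Finset.sum_div]
    refine Finset.sum_le_sum ?_
    intro p _
    have h2 : (ζ p * Real.sqrt (S lam p) + ζ p * Real.sqrt (S (fun i => lam (σ i)) p)) / 2
        = ζ p * ((Real.sqrt (S lam p) + Real.sqrt (S (fun i => lam (σ i)) p)) / 2) := by ring
    rw [h2]
    refine mul_le_mul_of_nonneg_left ?_ (hζ0 p)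
    have := sqrt_avg_ge (S lam p) (S (fun i => lam (σ i)) p) (hSnonneg _ _) (hSnonneg _ _)
    calc (Real.sqrt (S lam p) + Real.sqrt (S (fun i => lam (σ i)) p)) / 2
        ≤ Real.sqrt ((S lam p + S (fun i => lam (σ i)) p) / 2) := this
      _ = Real.sqrt (S lam' p) := by rw [hSavg p]
  · -- norm preservation
    have hsum : ∀ h : Fin k → ℝ,
        (∑ i, h i) = (∑ i ∈ (Finset.univ.erase j).erase j', h i) + h j' + h j := by
      intro h
      rw [Finset.sum_erase_add _ _ (Finset.mem_erase.mpr ⟨hjj.symm, Finset.mem_univ j'⟩),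
        Finset.sum_erase_add _ _ (Finset.mem_univ j)]
    rw [hsum (fun i => (lam' i) ^ 2), hsum (fun i => (lam i) ^ 2)]
    have hrest : (∑ i ∈ (Finset.univ.erase j).erase j', (lam' i) ^ 2)
        = ∑ i ∈ (Finset.univ.erase j).erase j', (lam i) ^ 2 := by
      refine Finset.sum_congr rfl ?_
      intro i hi
      simp only [Finset.mem_erase] at hi
      simp [hlam', hi.1, hi.2.1]
    rw [hrest]
    have hj : (lam' j) ^ 2 = c ^ 2 := by simp [hlam']
    have hj' : (lam' j') ^ 2 = c ^ 2 := by simp [hlam']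
    rw [hj, hj', hc2]
    ring
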